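/- Let M be a loopless matroid of rank d+1 on a finite ground set E with |E| ≥ 1. Fix e ∈ E, let α ∈ A¹(M) be the image of Σ_{F ∋ e} x_F and β ∈ A¹(M) the image of Σ_{F ∌ e} x_F (both images are independent of the choice of e). Write the reduced characteristic polynomial as χ̄_M(t) := χ_M(t)/(t−1) = m_0 t^d − m_1 t^{d−1} + ⋯ + (−1)^d m_d. Then for all k = 0, …, d, m_k = deg(α^{d−k} · β^k). -/

import Mathlib

structure FinMatroid (E : Type*) [Fintype E] [DecidableEq E] where
  Indep : Finset E → Prop
  indep_empty : Indep ∅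
  indep_subset : ∀ ⦃I J : Finset E⦄, Indep J → I ⊆ J → Indep I
  indep_exchange : ∀ ⦃I J : Finset E⦄, Indep I → Indep J → I.card < J.card →
    ∃ e ∈ J, e ∉ I ∧ Indep (insert e I)

namespace FinMatroid

variable {E : Type*} [Fintype E] [DecidableEq E]

open Classical in
noncomputable def rank (M : FinMatroid E) (A : Finset E) : ℕ :=
  (A.powerset.filter fun I => M.Indep I).sup Finset.card

noncomputable def rk (M : FinMatroid E) : ℕ := M.rank Finset.univ

noncomputable def closure (M : FinMatroid E) (A : Finset E) : Finset E :=
  Finset.univ.filter fun x => M.rank (insert x A) = M.rank A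

def IsFlat (M : FinMatroid E) (F : Finset E) : Prop := M.closure F = F

def Loopless (M : FinMatroid E) : Prop := M.closure ∅ = ∅

/-- The type of nonempty proper flats of `M`. -/
def ProperFlat (M : FinMatroid E) : Type _ :=
  {F : Finset E // M.IsFlat F ∧ F ≠ ∅ ∧ F ≠ Finset.univ}

instance (M : FinMatroid E) : Finite (ProperFlat M) := Subtype.finite

noncomputable instance (M : FinMatroid E) : Fintype (ProperFlat M) := Fintype.ofFinite _

variable (R : Type*) [CommRing R]

/-- The ideal of relations defining the Chow ring of a matroid: the linear relations (CH1)
`Σ_{F ∋ a} x_F = Σ_{F ∋ b} x_F` for `a, b ∈ E`, and the quadratic relations (CH2)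
`x_F · x_{F'} = 0` for incomparable proper flats `F, F'`. -/
noncomputable def chowIdeal (M : FinMatroid E) : Ideal (MvPolynomial (ProperFlat M) R) :=
  Ideal.span
    ((Set.range fun ab : E × E =>
        (∑ F : ProperFlat M, if ab.1 ∈ F.1 then MvPolynomial.X F else 0) -
        (∑ F : ProperFlat M, if ab.2 ∈ F.1 then MvPolynomial.X F else 0)) ∪
     {p | ∃ F F' : ProperFlat M, ¬F.1 ⊆ F'.1 ∧ ¬F'.1 ⊆ F.1 ∧
        p = MvPolynomial.X F * MvPolynomial.X F'})

/-- The Chow ring `A*(M)` (with coefficients in `R`). -/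
abbrev ChowRing (M : FinMatroid E) := MvPolynomial (ProperFlat M) R ⧸ chowIdeal R M

/-- The quotient map from the polynomial ring onto the Chow ring. -/
noncomputable def chowMk (M : FinMatroid E) :
    MvPolynomial (ProperFlat M) R →ₐ[R] ChowRing R M :=
  Ideal.Quotient.mkₐ R (chowIdeal R M)

/-- The degree-`k` graded piece `A^k(M)` of the Chow ring: the image of the homogeneous
degree-`k` polynomials. -/
noncomputable def piece (M : FinMatroid E) (k : ℕ) : Submodule R (ChowRing R M) :=
  (MvPolynomial.homogeneousSubmodule (ProperFlat M) R k).map (chowMk R M).toLinearMap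

lemma mk_mem_piece {M : FinMatroid E} {p : MvPolynomial (ProperFlat M) R} {k : ℕ}
    (hp : p.IsHomogeneous k) : chowMk R M p ∈ piece R M k :=
  ⟨p, (MvPolynomial.mem_homogeneousSubmodule _ _).2 hp, rfl⟩

lemma mul_mem_piece {M : FinMatroid E} {k l : ℕ} {a b : ChowRing R M}
    (ha : a ∈ piece R M k) (hb : b ∈ piece R M l) : a * b ∈ piece R M (k + l) := by
  obtain ⟨p, hp, rfl⟩ := ha
  obtain ⟨q, hq, rfl⟩ := hb
  refine ⟨p * q, ?_, by simp⟩
  simp only [SetLike.mem_coe, MvPolynomial.mem_homogeneousSubmodule] at hp hq ⊢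
  exact hp.mul hq

lemma pow_mem_piece {M : FinMatroid E} {a : ChowRing R M} (ha : a ∈ piece R M 1) (m : ℕ) :
    a ^ m ∈ piece R M m := by
  induction m with
  | zero =>
      refine ⟨1, ?_, by simp⟩
      simp only [SetLike.mem_coe, MvPolynomial.mem_homogeneousSubmodule]
      simpa using MvPolynomial.isHomogeneous_one (ProperFlat M) R
  | succ n ih =>
      have h := mul_mem_piece R ih ha
      simpa [pow_succ] using h

/-- The image in the Chow ring of the monomial attached to a flag of `d` proper flats lies in
the degree-`d` graded piece. -/
lemma flagMonomial_mem (M : FinMatroid E) (d : ℕ) (flag : Fin d → ProperFlat M) :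
    chowMk R M (∏ i, MvPolynomial.X (flag i)) ∈ piece R M d := by
  refine mk_mem_piece R ?_
  have h := MvPolynomial.IsHomogeneous.prod (R := R) Finset.univ
    (fun i => MvPolynomial.X (flag i)) (fun _ => 1)
    (fun i _ => MvPolynomial.isHomogeneous_X R (flag i))
  simpa using h

/-- Homogeneity (of degree one) of an `R`-linear combination of the variables. -/
lemma isHomogeneous_comb (M : FinMatroid E) (P : ProperFlat M → Prop) [DecidablePred P]
    (c : ProperFlat M → R) :
    MvPolynomial.IsHomogeneous
      (∑ F : ProperFlat M, if P F then MvPolynomial.C (c F) * MvPolynomial.X F else 0) 1 := by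
  refine MvPolynomial.IsHomogeneous.sum _ _ _ (fun F _ => ?_)
  by_cases h : P F
  · simp only [h, if_true]
    simpa using (MvPolynomial.isHomogeneous_C (ProperFlat M) (c F)).mul
      (MvPolynomial.isHomogeneous_X R F)
  · simp [h, MvPolynomial.isHomogeneous_zero]

end FinMatroid

namespace FinMatroid

variable {E : Type*} [Fintype E] [DecidableEq E]

open Classical in
/-- The finset of all flats of `M`. -/
noncomputable def flats (M : FinMatroid E) : Finset (Finset E) :=
  Finset.univ.filter fun F => M.IsFlat F

open Classical in
/-- `mu` is the Möbius function of the lattice of flats of `M`. -/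
def IsMobius (M : FinMatroid E) (mu : Finset E → Finset E → ℤ) : Prop :=
  (∀ F ∈ M.flats, mu F F = 1) ∧
  (∀ F ∈ M.flats, ∀ F' ∈ M.flats, ¬F ⊆ F' → mu F F' = 0) ∧
  (∀ F ∈ M.flats, ∀ F' ∈ M.flats, F ⊂ F' →
    ∑ G ∈ M.flats.filter (fun G => F ⊆ G ∧ G ⊆ F'), mu F G = 0)

open Classical in
/-- The characteristic polynomial `χ_M(t) = Σ_{F ∈ L(M)} μ(∅,F) t^{r(E) - r(F)}` of a
loopless matroid (`0` if `M` has a loop). -/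
noncomputable def charPoly (M : FinMatroid E) (mu : Finset E → Finset E → ℤ) : Polynomial ℤ :=
  if M.Loopless then
    ∑ F ∈ M.flats, Polynomial.C (mu ∅ F) * Polynomial.X ^ (M.rk - M.rank F)
  else 0

end FinMatroid

namespace FinMatroid
variable {E : Type*} [Fintype E] [DecidableEq E]
variable {M : FinMatroid E}

open Classical

lemma indep_card_le_rank {I A : Finset E} (hIA : I ⊆ A) (hI : M.Indep I) :
    I.card ≤ M.rank A := by
  apply Finset.le_sup
  simp only [Finset.mem_filter, Finset.mem_powerset]
  exact ⟨hIA, hI⟩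

lemma rank_le {A : Finset E} {n : ℕ} (h : ∀ I ⊆ A, M.Indep I → I.card ≤ n) :
    M.rank A ≤ n := by
  apply Finset.sup_le
  intro I hI
  simp only [Finset.mem_filter, Finset.mem_powerset] at hI
  exact h I hI.1 hI.2

lemma exists_max_indep (A : Finset E) : ∃ I ⊆ A, M.Indep I ∧ I.card = M.rank A := by
  classical
  have hne : (A.powerset.filter fun I => M.Indep I).Nonempty :=
    ⟨∅, by simp [M.indep_empty]⟩
  obtain ⟨I, hI, hcard⟩ := Finset.exists_mem_eq_sup _ hne Finset.card
  simp only [Finset.mem_filter, Finset.mem_powerset] at hI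
  exact ⟨I, hI.1, hI.2, hcard.symm⟩

lemma rank_mono {A B : Finset E} (h : A ⊆ B) : M.rank A ≤ M.rank B :=
  rank_le fun I hI hInd => indep_card_le_rank (hI.trans h) hInd

lemma rank_empty : M.rank (∅ : Finset E) = 0 := by
  refine Nat.le_zero.mp (rank_le fun I hI _ => ?_)
  simp [Finset.subset_empty.mp hI]

lemma rank_insert_le {A : Finset E} {x : E} : M.rank (insert x A) ≤ M.rank A + 1 := by
  refine rank_le fun I hI hInd => ?_
  have h1 : I.erase x ⊆ A := by
    intro y hy
    have := hI (Finset.mem_of_mem_erase hy)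
    rcases Finset.mem_insert.mp this with h | h
    · exact absurd h (Finset.ne_of_mem_erase hy)
    · exact h
  have h2 : (I.erase x).card ≤ M.rank A :=
    indep_card_le_rank h1 (M.indep_subset hInd (Finset.erase_subset _ _))
  calc I.card ≤ (I.erase x).card + 1 := by
        by_cases hx : x ∈ I
        · rw [Finset.card_erase_add_one hx]
        · rw [Finset.erase_eq_of_notMem hx]; omega
    _ ≤ M.rank A + 1 := by omega

lemma rank_le_insert {A : Finset E} {x : E} : M.rank A ≤ M.rank (insert x A) :=
  rank_mono (Finset.subset_insert _ _)

lemma mem_closure_iff {A : Finset E} {x : E} :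
    x ∈ M.closure A ↔ M.rank (insert x A) = M.rank A := by
  simp [closure]

lemma subset_closure (A : Finset E) : A ⊆ M.closure A := by
  intro x hx
  rw [mem_closure_iff, Finset.insert_eq_self.mpr hx]

lemma rank_closure (A : Finset E) : M.rank (M.closure A) = M.rank A := by
  refine le_antisymm ?_ (rank_mono (subset_closure A))
  by_contra h
  push_neg at h
  obtain ⟨I, hIsub, hIind, hIcard⟩ := exists_max_indep (M := M) (M.closure A)
  obtain ⟨J, hJsub, hJind, hJcard⟩ := exists_max_indep (M := M) A
  have hlt : J.card < I.card := by omega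
  obtain ⟨y, hyI, hyJ, hins⟩ := M.indep_exchange hJind hIind hlt
  have hy : y ∈ M.closure A := hIsub hyI
  rw [mem_closure_iff] at hy
  have : (insert y J).card ≤ M.rank (insert y A) :=
    indep_card_le_rank (Finset.insert_subset_insert _ hJsub) hins
  rw [Finset.card_insert_of_notMem hyJ, hy] at this
  omega

lemma closure_flat (A : Finset E) : M.IsFlat (M.closure A) := by
  refine Finset.Subset.antisymm ?_ (subset_closure _)
  intro x hx
  rw [mem_closure_iff] at hx ⊢
  rw [rank_closure] at hx
  refine le_antisymm ?_ rank_le_insert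
  calc M.rank (insert x A) ≤ M.rank (insert x (M.closure A)) :=
        rank_mono (Finset.insert_subset_insert _ (subset_closure A))
    _ = M.rank A := hx

lemma exists_max_indep_extending {B I : Finset E} (hIB : I ⊆ B) (hI : M.Indep I) :
    ∃ J, I ⊆ J ∧ J ⊆ B ∧ M.Indep J ∧ J.card = M.rank B := by
  classical
  suffices h : ∀ n (I : Finset E), I ⊆ B → M.Indep I → M.rank B - I.card ≤ n →
      ∃ J, I ⊆ J ∧ J ⊆ B ∧ M.Indep J ∧ J.card = M.rank B by
    exact h (M.rank B) I hIB hI (by omega)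
  intro n
  induction n with
  | zero =>
      intro I hIB hI hn
      have : I.card = M.rank B := le_antisymm (indep_card_le_rank hIB hI) (by omega)
      exact ⟨I, le_refl _, hIB, hI, this⟩
  | succ n ih =>
      intro I hIB hI hn
      by_cases hc : I.card = M.rank B
      · exact ⟨I, le_refl _, hIB, hI, hc⟩
      · have hlt : I.card < M.rank B :=
          lt_of_le_of_ne (indep_card_le_rank hIB hI) hc
        obtain ⟨K, hKB, hKind, hKcard⟩ := exists_max_indep (M := M) B
        obtain ⟨y, hyK, hyI, hins⟩ := M.indep_exchange hI hKind (by omega)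
        obtain ⟨J, hJ1, hJ2, hJ3, hJ4⟩ := ih (insert y I)
          (Finset.insert_subset (hKB hyK) hIB) hins
          (by rw [Finset.card_insert_of_notMem hyI]; omega)
        exact ⟨J, (Finset.subset_insert _ _).trans hJ1, hJ2, hJ3, hJ4⟩

lemma indep_insert_of_rank_ne {X J : Finset E} {x : E}
    (hx : M.rank (insert x X) ≠ M.rank X) (hJX : J ⊆ X) (hJ : M.Indep J)
    (hJc : J.card = M.rank X) : x ∉ J ∧ M.Indep (insert x J) := by
  have hxX : x ∉ X := by
    intro h
    exact hx (by rw [Finset.insert_eq_self.mpr h])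
  have hrk : M.rank (insert x X) = M.rank X + 1 := by
    have h1 := rank_insert_le (M := M) (A := X) (x := x)
    have h2 := rank_le_insert (M := M) (A := X) (x := x)
    omega
  obtain ⟨K, hKsub, hKind, hKcard⟩ := exists_max_indep (M := M) (insert x X)
  have hlt : J.card < K.card := by omega
  obtain ⟨y, hyK, hyJ, hins⟩ := M.indep_exchange hJ hKind hlt
  have hyx : y = x := by
    by_contra hne
    have hyX : y ∈ X := by
      rcases Finset.mem_insert.mp (hKsub hyK) with h | h
      · exact absurd h hne
      · exact h
    have : (insert y J).card ≤ M.rank X :=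
      indep_card_le_rank (Finset.insert_subset hyX hJX) hins
    rw [Finset.card_insert_of_notMem hyJ] at this
    omega
  subst hyx
  exact ⟨hyJ, hins⟩

lemma closure_subset_flat {A F : Finset E} (hAF : A ⊆ F) (hF : M.IsFlat F) :
    M.closure A ⊆ F := by
  intro x hx
  rw [mem_closure_iff] at hx
  by_contra hxF
  have hxF' : M.rank (insert x F) ≠ M.rank F := by
    intro h
    exact hxF (by rw [← hF]; exact mem_closure_iff.mpr h)
  obtain ⟨JA, hJA1, hJA2, hJA3⟩ := exists_max_indep (M := M) A
  obtain ⟨JF, hJF0, hJF1, hJF2, hJF3⟩ :=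
    exists_max_indep_extending (hJA1.trans hAF) hJA2
  obtain ⟨hxJF, hins⟩ := indep_insert_of_rank_ne hxF' hJF1 hJF2 hJF3
  have hxJA : x ∉ JA := fun h => hxJF (hJF0 h)
  have : (insert x JA).card ≤ M.rank (insert x A) :=
    indep_card_le_rank (Finset.insert_subset_insert _ hJA1)
      (M.indep_subset hins (Finset.insert_subset_insert _ hJF0))
  rw [Finset.card_insert_of_notMem hxJA, hx] at this
  omega

lemma flat_eq_of_subset_of_rank_le {F G : Finset E} (hF : M.IsFlat F) (hG : M.IsFlat G)
    (hFG : F ⊆ G) (hr : M.rank G ≤ M.rank F) : F = G := by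
  refine Finset.Subset.antisymm hFG fun x hx => ?_
  have h1 : M.rank (insert x F) ≤ M.rank F := by
    calc M.rank (insert x F) ≤ M.rank G := rank_mono (Finset.insert_subset hx hFG)
      _ ≤ M.rank F := hr
  have : x ∈ M.closure F := mem_closure_iff.mpr (le_antisymm h1 rank_le_insert)
  rwa [hF] at this

lemma rank_lt_of_flat_ssubset {F G : Finset E} (hF : M.IsFlat F) (hG : M.IsFlat G)
    (hFG : F ⊂ G) : M.rank F < M.rank G := by
  rcases lt_or_ge (M.rank F) (M.rank G) with h | h
  · exact h
  · exact absurd (flat_eq_of_subset_of_rank_le hF hG hFG.subset h) hFG.ne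

lemma univ_flat : M.IsFlat (Finset.univ : Finset E) :=
  Finset.Subset.antisymm (Finset.subset_univ _) (subset_closure _)

lemma flat_rank_lt_of_ne_univ {F : Finset E} (hF : M.IsFlat F) (hne : F ≠ Finset.univ) :
    M.rank F < M.rk := by
  rcases lt_or_ge (M.rank F) M.rk with h | h
  · exact h
  · exact absurd (flat_eq_of_subset_of_rank_le hF univ_flat (Finset.subset_univ _) h) hne

lemma rank_singleton (hM : M.Loopless) (x : E) : M.rank {x} = 1 := by
  have hx : x ∉ M.closure ∅ := by rw [hM]; simp
  rw [mem_closure_iff] at hx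
  have h0 : M.rank (∅ : Finset E) = 0 := rank_empty
  have h1 := rank_insert_le (M := M) (A := (∅ : Finset E)) (x := x)
  have : M.rank (insert x ∅) = M.rank {x} := by simp
  omega

lemma rank_pos_of_nonempty (hM : M.Loopless) {F : Finset E} (hne : F.Nonempty) :
    1 ≤ M.rank F := by
  obtain ⟨x, hx⟩ := hne
  calc 1 = M.rank {x} := (rank_singleton hM x).symm
    _ ≤ M.rank F := rank_mono (by simpa using hx)

lemma rank_closure_insert_flat {F : Finset E} (hF : M.IsFlat F) {a : E} (ha : a ∉ F) :
    M.rank (M.closure (insert a F)) = M.rank F + 1 := by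
  rw [rank_closure]
  have hne : M.rank (insert a F) ≠ M.rank F := by
    intro h
    exact ha (by rw [← hF]; exact mem_closure_iff.mpr h)
  have h1 := rank_insert_le (M := M) (A := F) (x := a)
  have h2 := rank_le_insert (M := M) (A := F) (x := a)
  omega

lemma flat_eq_closure_insert {F G : Finset E} (hF : M.IsFlat F) (hG : M.IsFlat G)
    {a : E} (ha : a ∉ F) (hFG : F ⊆ G) (haG : a ∈ G) (hr : M.rank G = M.rank F + 1) :
    G = M.closure (insert a F) := by
  have h1 : M.closure (insert a F) ⊆ G :=
    closure_subset_flat (Finset.insert_subset haG hFG) hG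
  refine (flat_eq_of_subset_of_rank_le (closure_flat _) hG h1 ?_).symm
  rw [rank_closure_insert_flat hF ha, hr]

end FinMatroid
namespace FinMatroid
variable {E : Type*} [Fintype E] [DecidableEq E]
variable {M : FinMatroid E}
open Classical

lemma mem_flats {F : Finset E} : F ∈ M.flats ↔ M.IsFlat F := by
  simp [flats]

lemma weisner (hM : M.Loopless) {mu : Finset E → Finset E → ℤ} (hmu : M.IsMobius mu)
    (e' : E) :
    ∀ Z ∈ M.flats, e' ∈ Z →
      ∑ Y ∈ M.flats.filter (fun Y => Y ⊆ Z ∧ M.closure (insert e' Y) = Z), mu ∅ Y = 0 := by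
  suffices h : ∀ n : ℕ, ∀ Z ∈ M.flats, e' ∈ Z → Z.card ≤ n →
      ∑ Y ∈ M.flats.filter (fun Y => Y ⊆ Z ∧ M.closure (insert e' Y) = Z), mu ∅ Y = 0 by
    intro Z hZ he
    exact h Z.card Z hZ he le_rfl
  intro n
  induction n with
  | zero =>
      intro Z hZ he hcard
      exact absurd (Finset.card_pos.mpr ⟨e', he⟩) (by omega)
  | succ n ih =>
      intro Z hZ he hcard
      have hZflat : M.IsFlat Z := mem_flats.mp hZ
      have htotal : ∑ Y ∈ M.flats.filter (fun Y => Y ⊆ Z), mu ∅ Y = 0 := by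
        have h := hmu.2.2 ∅ (mem_flats.mpr hM) Z hZ
          (Finset.ssubset_iff_of_subset (Finset.empty_subset _) |>.mpr ⟨e', he, by simp⟩)
        simpa using h
      have hmaps : ∀ Y ∈ M.flats.filter (fun Y => Y ⊆ Z),
          M.closure (insert e' Y) ∈ M.flats.filter (fun X => e' ∈ X ∧ X ⊆ Z) := by
        intro Y hY
        rw [Finset.mem_filter] at hY ⊢
        refine ⟨mem_flats.mpr (closure_flat _), ?_, ?_⟩
        · exact subset_closure _ (Finset.mem_insert_self _ _)
        · exact closure_subset_flat (Finset.insert_subset he hY.2) hZflat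
      have hfib := Finset.sum_fiberwise_of_maps_to hmaps (fun Y => mu ∅ Y)
      rw [htotal] at hfib
      -- each fiber sum equals the weisner sum for X
      have hfibeq : ∀ X ∈ M.flats.filter (fun X => e' ∈ X ∧ X ⊆ Z),
          ((M.flats.filter (fun Y => Y ⊆ Z)).filter
            (fun Y => M.closure (insert e' Y) = X)).sum (fun Y => mu ∅ Y)
          = ∑ Y ∈ M.flats.filter (fun Y => Y ⊆ X ∧ M.closure (insert e' Y) = X),
              mu ∅ Y := by
        intro X hX
        rw [Finset.mem_filter] at hX
        rw [Finset.filter_filter]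
        apply Finset.sum_congr _ (fun _ _ => rfl)
        apply Finset.filter_congr
        intro Y hY
        constructor
        · rintro ⟨_, h2⟩
          exact ⟨(Finset.subset_insert _ _).trans (h2 ▸ subset_closure _), h2⟩
        · rintro ⟨h1, h2⟩
          exact ⟨h1.trans hX.2.2, h2⟩
      have hzero : ∀ X ∈ M.flats.filter (fun X => e' ∈ X ∧ X ⊆ Z), X ≠ Z →
          ((M.flats.filter (fun Y => Y ⊆ Z)).filter
            (fun Y => M.closure (insert e' Y) = X)).sum (fun Y => mu ∅ Y) = 0 := by
        intro X hX hne
        rw [hfibeq X hX]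
        rw [Finset.mem_filter] at hX
        refine ih X hX.1 hX.2.1 ?_
        have : X ⊂ Z := Finset.ssubset_iff_subset_ne.mpr ⟨hX.2.2, hne⟩
        have := Finset.card_lt_card this
        omega
      have hZmem : Z ∈ M.flats.filter (fun X => e' ∈ X ∧ X ⊆ Z) := by
        rw [Finset.mem_filter]; exact ⟨hZ, he, le_refl _⟩
      have := Finset.sum_eq_single_of_mem Z hZmem hzero
      rw [this] at hfib
      rw [hfibeq Z hZmem] at hfib
      exact hfib

lemma coatom_weisner (hM : M.Loopless) {mu : Finset E → Finset E → ℤ}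
    (hmu : M.IsMobius mu) (e' : E) {Z : Finset E} (hZ : Z ∈ M.flats) (he : e' ∈ Z) :
    mu ∅ Z = - ∑ Y ∈ M.flats.filter
      (fun Y => Y ⊂ Z ∧ e' ∉ Y ∧ M.rank Y + 1 = M.rank Z), mu ∅ Y := by
  have hw := weisner hM hmu e' Z hZ he
  have hZflat := mem_flats.mp hZ
  have hZS : Z ∈ M.flats.filter (fun Y => Y ⊆ Z ∧ M.closure (insert e' Y) = Z) := by
    rw [Finset.mem_filter]
    refine ⟨hZ, le_refl _, ?_⟩
    rw [Finset.insert_eq_self.mpr he]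
    exact hZflat
  rw [← Finset.add_sum_erase _ _ hZS] at hw
  have herase : (M.flats.filter (fun Y => Y ⊆ Z ∧ M.closure (insert e' Y) = Z)).erase Z
      = M.flats.filter (fun Y => Y ⊂ Z ∧ e' ∉ Y ∧ M.rank Y + 1 = M.rank Z) := by
    ext Y
    rw [Finset.mem_erase, Finset.mem_filter, Finset.mem_filter]
    constructor
    · rintro ⟨hne, hYf, hYZ, hcl⟩
      have hYflat := mem_flats.mp hYf
      have he'Y : e' ∉ Y := by
        intro h
        rw [Finset.insert_eq_self.mpr h, hYflat] at hcl
        exact hne hcl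
      refine ⟨hYf, Finset.ssubset_iff_subset_ne.mpr ⟨hYZ, hne⟩, he'Y, ?_⟩
      rw [← hcl, rank_closure_insert_flat hYflat he'Y]
    · rintro ⟨hYf, hYZ, he'Y, hr⟩
      have hYflat := mem_flats.mp hYf
      have hne : Y ≠ Z := fun h => he'Y (h ▸ he)
      refine ⟨hne, hYf, hYZ.subset, ?_⟩
      exact (flat_eq_closure_insert hYflat hZflat he'Y hYZ.subset he hr.symm).symm
  rw [herase] at hw
  omega

lemma mu_self_empty {mu : Finset E → Finset E → ℤ} (hM : M.Loopless)
    (hmu : M.IsMobius mu) : mu ∅ ∅ = 1 :=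
  hmu.1 ∅ (mem_flats.mpr hM)

lemma mu_atom (hM : M.Loopless) {mu : Finset E → Finset E → ℤ} (hmu : M.IsMobius mu)
    {Z : Finset E} (hZ : Z ∈ M.flats) (hr : M.rank Z = 1) : mu ∅ Z = -1 := by
  have hZflat := mem_flats.mp hZ
  have hne : Z.Nonempty := by
    rcases Finset.eq_empty_or_nonempty Z with h | h
    · rw [h, rank_empty] at hr; omega
    · exact h
  have h := hmu.2.2 ∅ (mem_flats.mpr hM) Z hZ
    (Finset.ssubset_iff_of_subset (Finset.empty_subset _) |>.mpr
      (by obtain ⟨x, hx⟩ := hne; exact ⟨x, hx, by simp⟩))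
  have hset : M.flats.filter (fun G => ∅ ⊆ G ∧ G ⊆ Z) = {∅, Z} := by
    ext G
    rw [Finset.mem_filter]
    simp only [Finset.mem_insert, Finset.mem_singleton]
    constructor
    · rintro ⟨hGf, -, hGZ⟩
      rcases Finset.eq_empty_or_nonempty G with h | h
      · exact Or.inl h
      · refine Or.inr (flat_eq_of_subset_of_rank_le (mem_flats.mp hGf) hZflat hGZ ?_)
        rw [hr]
        exact rank_pos_of_nonempty hM h
    · rintro (rfl | rfl)
      · exact ⟨mem_flats.mpr hM, by simp⟩
      · exact ⟨hZ, by simp⟩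
  rw [hset] at h
  rw [Finset.sum_insert (by simp [Ne.symm (Finset.nonempty_iff_ne_empty.mp hne)]),
    Finset.sum_singleton] at h
  have := mu_self_empty hM hmu
  omega

noncomputable def pick (e : E) (F : Finset E) : E :=
  if h : F.Nonempty then h.choose else e

lemma pick_mem {e : E} {F : Finset E} (h : F.Nonempty) : pick e F ∈ F := by
  rw [pick, dif_pos h]
  exact h.choose_spec

noncomputable def cw (M : FinMatroid E) (e : E) : ℕ → Finset E → ℤ
  | 0, _ => 1
  | (s+1), F =>
      ∑ G ∈ M.flats.filter (fun G => G ⊂ F ∧ pick e F ∉ G ∧ M.rank G = s + 1),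
        cw M e s G

lemma cw_eq_mu (hM : M.Loopless) {mu : Finset E → Finset E → ℤ} (hmu : M.IsMobius mu)
    (e : E) : ∀ s : ℕ, ∀ Z ∈ M.flats, M.rank Z = s + 1 →
      cw M e s Z = (-1 : ℤ) ^ (s + 1) * mu ∅ Z := by
  intro s
  induction s with
  | zero =>
      intro Z hZ hr
      rw [cw, mu_atom hM hmu hZ hr]
      ring
  | succ s ih =>
      intro Z hZ hr
      have hne : Z.Nonempty := by
        rcases Finset.eq_empty_or_nonempty Z with h | h
        · rw [h, rank_empty] at hr; omega
        · exact h
      have hcw : cw M e (s+1) Z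
          = ∑ G ∈ M.flats.filter (fun G => G ⊂ Z ∧ pick e Z ∉ G ∧ M.rank G = s + 1),
              (-1 : ℤ) ^ (s+1) * mu ∅ G := by
        rw [cw]
        apply Finset.sum_congr rfl
        intro G hG
        rw [Finset.mem_filter] at hG
        exact ih G hG.1 hG.2.2.2
      rw [hcw, ← Finset.mul_sum]
      have hcoat := coatom_weisner hM hmu (pick e Z) hZ (pick_mem hne)
      have hsets : M.flats.filter (fun G => G ⊂ Z ∧ pick e Z ∉ G ∧ M.rank G = s + 1)
          = M.flats.filter (fun Y => Y ⊂ Z ∧ pick e Z ∉ Y ∧ M.rank Y + 1 = M.rank Z) := by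
        apply Finset.filter_congr
        intro Y _
        rw [hr]
        constructor
        · rintro ⟨h1, h2, h3⟩; exact ⟨h1, h2, by omega⟩
        · rintro ⟨h1, h2, h3⟩; exact ⟨h1, h2, by omega⟩
      rw [hsets, hcoat]
      ring
  
end FinMatroid
namespace FinMatroid
variable {E : Type*} [Fintype E] [DecidableEq E]
variable {M : FinMatroid E}
open Classical Polynomial

lemma flat_rank_le_d (hM : M.Loopless) {d : ℕ} (hrk : M.rk = d + 1) {F : Finset E}
    (hF : F ∈ M.flats) (hne : F ≠ Finset.univ) : M.rank F ≤ d := by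
  have := flat_rank_lt_of_ne_univ (mem_flats.mp hF) hne
  omega

lemma key_vanishing (hM : M.Loopless) {mu : Finset E → Finset E → ℤ} (hmu : M.IsMobius mu)
    (e : E) (p : ℕ → Polynomial ℤ) :
    ∑ F ∈ M.flats, Polynomial.C (mu ∅ F) * p (M.rank (M.closure (insert e F))) = 0 := by
  have hmaps : ∀ F ∈ M.flats,
      M.closure (insert e F) ∈ M.flats.filter (fun X => e ∈ X) := by
    intro F _
    rw [Finset.mem_filter]
    exact ⟨mem_flats.mpr (closure_flat _), subset_closure _ (Finset.mem_insert_self _ _)⟩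
  rw [← Finset.sum_fiberwise_of_maps_to hmaps]
  apply Finset.sum_eq_zero
  intro Z hZ
  rw [Finset.mem_filter] at hZ
  have hZflat := mem_flats.mp hZ.1
  have hcongr : ∑ F ∈ M.flats.filter (fun F => M.closure (insert e F) = Z),
      Polynomial.C (mu ∅ F) * p (M.rank (M.closure (insert e F)))
      = ∑ F ∈ M.flats.filter (fun F => M.closure (insert e F) = Z),
          Polynomial.C (mu ∅ F) * p (M.rank Z) := by
    apply Finset.sum_congr rfl
    intro F hF
    rw [Finset.mem_filter] at hF
    rw [hF.2]
  rw [hcongr, ← Finset.sum_mul, ← map_sum Polynomial.C]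
  have hset : M.flats.filter (fun F => M.closure (insert e F) = Z)
      = M.flats.filter (fun Y => Y ⊆ Z ∧ M.closure (insert e Y) = Z) := by
    apply Finset.filter_congr
    intro Y _
    constructor
    · intro h
      exact ⟨(Finset.subset_insert _ _).trans (h ▸ subset_closure _), h⟩
    · exact fun h => h.2
  rw [hset, weisner hM hmu e Z hZ.1 hZ.2]
  simp

lemma charPoly_factor (hM : M.Loopless) {d : ℕ} (hrk : M.rk = d + 1) (e : E)
    {mu : Finset E → Finset E → ℤ} (hmu : M.IsMobius mu) :
    M.charPoly mu = (Polynomial.X - 1) *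
      ∑ F ∈ M.flats.filter (fun F => e ∉ F),
        Polynomial.C (mu ∅ F) * Polynomial.X ^ (d - M.rank F) := by
  set Q := ∑ F ∈ M.flats.filter (fun F => e ∉ F),
      Polynomial.C (mu ∅ F) * Polynomial.X ^ (d - M.rank F) with hQ
  have hrankle : ∀ F ∈ M.flats, e ∉ F → M.rank F ≤ d := by
    intro F hF he
    exact flat_rank_le_d hM hrk hF (fun h => he (h ▸ Finset.mem_univ e))
  have hkey := key_vanishing hM hmu e (fun n => Polynomial.X ^ (M.rk - n))
  -- split key sum by e ∈ F
  rw [← Finset.sum_filter_add_sum_filter_not M.flats (fun F => e ∈ F)] at hkey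
  have h1 : ∑ F ∈ M.flats.filter (fun F => e ∈ F),
      Polynomial.C (mu ∅ F) * Polynomial.X ^ (M.rk - M.rank (M.closure (insert e F)))
      = ∑ F ∈ M.flats.filter (fun F => e ∈ F),
        Polynomial.C (mu ∅ F) * Polynomial.X ^ (M.rk - M.rank F) := by
    apply Finset.sum_congr rfl
    intro F hF
    rw [Finset.mem_filter] at hF
    rw [Finset.insert_eq_self.mpr hF.2, mem_flats.mp hF.1]
  have h2 : ∑ F ∈ M.flats.filter (fun F => ¬ e ∈ F),
      Polynomial.C (mu ∅ F) * Polynomial.X ^ (M.rk - M.rank (M.closure (insert e F)))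
      = ∑ F ∈ M.flats.filter (fun F => ¬ e ∈ F),
        Polynomial.C (mu ∅ F) * Polynomial.X ^ (d - M.rank F) := by
    apply Finset.sum_congr rfl
    intro F hF
    rw [Finset.mem_filter] at hF
    have hFflat := mem_flats.mp hF.1
    have hle := hrankle F hF.1 hF.2
    rw [rank_closure_insert_flat hFflat hF.2]
    have hx : M.rk - (M.rank F + 1) = d - M.rank F := by omega
    rw [hx]
  rw [h1, h2] at hkey
  -- now hkey : Σ_{e∈F} C X^{rk-rF} + Q = 0
  have hchar : M.charPoly mu
      = ∑ F ∈ M.flats.filter (fun F => e ∈ F),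
          Polynomial.C (mu ∅ F) * Polynomial.X ^ (M.rk - M.rank F)
        + ∑ F ∈ M.flats.filter (fun F => ¬ e ∈ F),
          Polynomial.C (mu ∅ F) * Polynomial.X ^ (M.rk - M.rank F) := by
    rw [charPoly, if_pos hM, ← Finset.sum_filter_add_sum_filter_not M.flats (fun F => e ∈ F)]
  have h3 : ∑ F ∈ M.flats.filter (fun F => ¬ e ∈ F),
      Polynomial.C (mu ∅ F) * Polynomial.X ^ (M.rk - M.rank F)
      = Q * Polynomial.X := by
    rw [hQ, Finset.sum_mul]
    apply Finset.sum_congr rfl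
    intro F hF
    rw [Finset.mem_filter] at hF
    have hle := hrankle F hF.1 hF.2
    have : M.rk - M.rank F = (d - M.rank F) + 1 := by omega
    rw [this, pow_succ, mul_assoc]
  rw [h3] at hchar
  have h4 : ∑ F ∈ M.flats.filter (fun F => e ∈ F),
      Polynomial.C (mu ∅ F) * Polynomial.X ^ (M.rk - M.rank F) = - Q := by
    exact eq_neg_of_add_eq_zero_left hkey
  rw [h4] at hchar
  rw [hchar]
  ring

end FinMatroid

namespace FinMatroid
variable {E : Type*} [Fintype E] [DecidableEq E]
variable {M : FinMatroid E}
open Classical Polynomial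

lemma q_coeff (hM : M.Loopless) {d : ℕ} (hrk : M.rk = d + 1) (e : E)
    {mu : Finset E → Finset E → ℤ} (hmu : M.IsMobius mu)
    {q : Polynomial ℤ} (hq : M.charPoly mu = (Polynomial.X - 1) * q)
    {k : ℕ} (hk : k ≤ d) :
    q.coeff (d - k) = ∑ F ∈ M.flats.filter (fun F => e ∉ F ∧ M.rank F = k), mu ∅ F := by
  have hQ := charPoly_factor hM hrk e hmu
  have hne : (Polynomial.X - 1 : Polynomial ℤ) ≠ 0 := by
    have h : (Polynomial.X - 1 : Polynomial ℤ) = Polynomial.X - Polynomial.C 1 := by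
      rw [map_one]
    rw [h]
    exact Polynomial.X_sub_C_ne_zero 1
  have hqQ : q = ∑ F ∈ M.flats.filter (fun F => e ∉ F),
      Polynomial.C (mu ∅ F) * Polynomial.X ^ (d - M.rank F) :=
    mul_left_cancel₀ hne (by rw [← hq, hQ])
  rw [hqQ, Polynomial.finset_sum_coeff]
  have h1 : ∀ F ∈ M.flats.filter (fun F => e ∉ F),
      (Polynomial.C (mu ∅ F) * Polynomial.X ^ (d - M.rank F)).coeff (d - k)
      = if d - M.rank F = d - k then mu ∅ F else 0 := by
    intro F _
    rw [Polynomial.coeff_C_mul, Polynomial.coeff_X_pow]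
    rcases eq_or_ne (d - M.rank F) (d - k) with h | h
    · simp [h]
    · rw [if_neg (Ne.symm h), if_neg h, mul_zero]
  rw [Finset.sum_congr rfl h1, Finset.sum_ite, Finset.sum_const_zero, add_zero,
    Finset.filter_filter]
  apply Finset.sum_congr _ (fun _ _ => rfl)
  apply Finset.filter_congr
  intro F hF
  constructor
  · rintro ⟨h2, h3⟩
    have := flat_rank_le_d hM hrk hF (fun h => h2 (h ▸ Finset.mem_univ e))
    exact ⟨h2, by omega⟩
  · rintro ⟨h2, h3⟩
    exact ⟨h2, by omega⟩

end FinMatroid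
set_option synthInstance.maxHeartbeats 1000000
set_option maxHeartbeats 1000000
namespace FinMatroid
variable {E : Type*} [Fintype E] [DecidableEq E]
open Classical MvPolynomial

section Chow
variable (M : FinMatroid E)

noncomputable def xv (F : ProperFlat M) : ChowRing ℤ M := chowMk ℤ M (MvPolynomial.X F)

noncomputable def av (e : E) : ChowRing ℤ M :=
  chowMk ℤ M (∑ F : ProperFlat M, if e ∈ F.1 then MvPolynomial.X F else 0)

noncomputable def bv (e : E) : ChowRing ℤ M :=
  chowMk ℤ M (∑ F : ProperFlat M, if e ∉ F.1 then MvPolynomial.X F else 0)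

variable {M}

lemma xv_mem (F : ProperFlat M) : xv M F ∈ piece ℤ M 1 :=
  mk_mem_piece ℤ (MvPolynomial.isHomogeneous_X ℤ F)

lemma av_mem (e : E) : av M e ∈ piece ℤ M 1 := by
  refine mk_mem_piece ℤ ?_
  have h := isHomogeneous_comb ℤ M (fun F => e ∈ F.1) (fun _ => (1 : ℤ))
  simpa using h

lemma bv_mem (e : E) : bv M e ∈ piece ℤ M 1 := by
  refine mk_mem_piece ℤ ?_
  have h := isHomogeneous_comb ℤ M (fun F => e ∉ F.1) (fun _ => (1 : ℤ))
  simpa using h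

lemma chow_rel1 (a b : E) :
    chowMk ℤ M (∑ F : ProperFlat M, if a ∈ F.1 then MvPolynomial.X F else 0)
      = chowMk ℤ M (∑ F : ProperFlat M, if b ∈ F.1 then MvPolynomial.X F else 0) := by
  have hmem : ((∑ F : ProperFlat M, if a ∈ F.1 then MvPolynomial.X F else 0) -
      (∑ F : ProperFlat M, if b ∈ F.1 then MvPolynomial.X F else 0)) ∈ chowIdeal ℤ M :=
    Ideal.subset_span (Or.inl ⟨(a, b), rfl⟩)
  show Ideal.Quotient.mk (chowIdeal ℤ M) _ = Ideal.Quotient.mk (chowIdeal ℤ M) _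
  exact Ideal.Quotient.eq.mpr hmem

lemma chow_rel2 {F G : ProperFlat M} (h1 : ¬F.1 ⊆ G.1) (h2 : ¬G.1 ⊆ F.1) :
    xv M F * xv M G = 0 := by
  have : xv M F * xv M G = chowMk ℤ M (MvPolynomial.X F * MvPolynomial.X G) := by
    rw [map_mul]; rfl
  rw [this]
  show Ideal.Quotient.mk (chowIdeal ℤ M) _ = 0
  rw [Ideal.Quotient.eq_zero_iff_mem]
  exact Ideal.subset_span (Or.inr ⟨F, G, h1, h2, rfl⟩)

lemma sum_xv_pred (p : ProperFlat M → Prop) [DecidablePred p] :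
    chowMk ℤ M (∑ F : ProperFlat M, if p F then MvPolynomial.X F else 0)
      = ∑ F ∈ Finset.univ.filter p, xv M F := by
  rw [map_sum, Finset.sum_filter]
  apply Finset.sum_congr rfl
  intro F _
  rw [apply_ite (chowMk ℤ M), map_zero]
  rfl

lemma av_eq (e a : E) :
    av M e = ∑ F ∈ Finset.univ.filter (fun F : ProperFlat M => a ∈ F.1), xv M F := by
  rw [av.eq_def, chow_rel1 e a]
  exact sum_xv_pred (fun F : ProperFlat M => a ∈ F.1)

lemma bv_eq (e a : E) :
    bv M e = ∑ F ∈ Finset.univ.filter (fun F : ProperFlat M => a ∉ F.1), xv M F := by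
  have h1 : ∀ b : E, (∑ F : ProperFlat M, if b ∉ F.1 then MvPolynomial.X F else 0)
      = (∑ F : ProperFlat M, MvPolynomial.X F)
        - ∑ F : ProperFlat M, if b ∈ F.1 then MvPolynomial.X F else (0 : MvPolynomial (ProperFlat M) ℤ) := by
    intro b
    rw [← Finset.sum_sub_distrib]
    apply Finset.sum_congr rfl
    intro F _
    by_cases h : b ∈ F.1 <;> simp [h]
  rw [bv.eq_def, h1 e, map_sub, chow_rel1 e a, ← map_sub, ← h1 a]
  exact sum_xv_pred (fun F : ProperFlat M => a ∉ F.1)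

lemma expA (e : E) (u : ChowRing ℤ M) (T : ProperFlat M) {a : E} (ha : a ∉ T.1) :
    av M e * (u * xv M T) =
      ∑ G ∈ Finset.univ.filter (fun G : ProperFlat M => T.1 ⊂ G.1 ∧ a ∈ G.1),
        u * xv M T * xv M G := by
  rw [av_eq e a, Finset.sum_mul]
  have hsplit : ∀ G ∈ Finset.univ.filter (fun G : ProperFlat M => a ∈ G.1),
      xv M G * (u * xv M T) = if T.1 ⊂ G.1 then u * xv M T * xv M G else 0 := by
    intro G hG
    rw [Finset.mem_filter] at hG
    by_cases h : T.1 ⊂ G.1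
    · rw [if_pos h]; ring
    · rw [if_neg h]
      have hGT : ¬ G.1 ⊆ T.1 := fun hsub => ha (hsub hG.2)
      have hTG : ¬ T.1 ⊆ G.1 := by
        intro hsub
        rcases eq_or_ne T.1 G.1 with heq | hne
        · exact ha (heq ▸ hG.2)
        · exact h (Finset.ssubset_iff_subset_ne.mpr ⟨hsub, hne⟩)
      have : xv M G * (u * xv M T) = u * (xv M T * xv M G) := by ring
      rw [this, chow_rel2 hTG hGT, mul_zero]
  rw [Finset.sum_congr rfl hsplit, Finset.sum_ite, Finset.sum_const_zero, add_zero,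
    Finset.filter_filter]
  apply Finset.sum_congr _ (fun _ _ => rfl)
  apply Finset.filter_congr
  intro G _
  exact ⟨fun h => ⟨h.2, h.1⟩, fun h => ⟨h.2, h.1⟩⟩

lemma expB (e : E) (u : ChowRing ℤ M) (B : ProperFlat M) {a : E} (ha : a ∈ B.1) :
    bv M e * (xv M B * u) =
      ∑ G ∈ Finset.univ.filter (fun G : ProperFlat M => G.1 ⊂ B.1 ∧ a ∉ G.1),
        xv M G * (xv M B * u) := by
  rw [bv_eq e a, Finset.sum_mul]
  have hsplit : ∀ G ∈ Finset.univ.filter (fun G : ProperFlat M => a ∉ G.1),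
      xv M G * (xv M B * u) = if G.1 ⊂ B.1 then xv M G * (xv M B * u) else 0 := by
    intro G hG
    rw [Finset.mem_filter] at hG
    by_cases h : G.1 ⊂ B.1
    · rw [if_pos h]
    · rw [if_neg h]
      have hBG : ¬ B.1 ⊆ G.1 := fun hsub => hG.2 (hsub ha)
      have hGB : ¬ G.1 ⊆ B.1 := by
        intro hsub
        rcases eq_or_ne G.1 B.1 with heq | hne
        · exact hG.2 (heq.symm ▸ ha)
        · exact h (Finset.ssubset_iff_subset_ne.mpr ⟨hsub, hne⟩)
      have : xv M G * (xv M B * u) = (xv M G * xv M B) * u := by ring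
      rw [this, chow_rel2 hGB hBG, zero_mul]
  rw [Finset.sum_congr rfl hsplit, Finset.sum_ite, Finset.sum_const_zero, add_zero,
    Finset.filter_filter]
  apply Finset.sum_congr _ (fun _ _ => rfl)
  apply Finset.filter_congr
  intro G _
  exact ⟨fun h => ⟨h.2, h.1⟩, fun h => ⟨h.2, h.1⟩⟩

end Chow

section DegFun
variable {M : FinMatroid E} {d : ℕ}

noncomputable def DD (M : FinMatroid E) (d : ℕ) (deg : (piece ℤ M d) →+ ℤ)
    (u : ChowRing ℤ M) : ℤ :=
  if h : u ∈ piece ℤ M d then deg ⟨u, h⟩ else 0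

lemma DD_eq (deg : (piece ℤ M d) →+ ℤ) {u : ChowRing ℤ M} (h : u ∈ piece ℤ M d) :
    DD M d deg u = deg ⟨u, h⟩ := dif_pos h

lemma DD_sum (deg : (piece ℤ M d) →+ ℤ) {ι : Type*} {s : Finset ι}
    {f : ι → ChowRing ℤ M} (hf : ∀ i ∈ s, f i ∈ piece ℤ M d) :
    DD M d deg (∑ i ∈ s, f i) = ∑ i ∈ s, DD M d deg (f i) := by
  classical
  set g : ι → (piece ℤ M d) := fun i =>
    if h : f i ∈ piece ℤ M d then ⟨f i, h⟩ else 0 with hg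
  have hgi : ∀ i ∈ s, ((g i : (piece ℤ M d)) : ChowRing ℤ M) = f i := by
    intro i hi
    rw [hg]
    simp only [dif_pos (hf i hi)]
  have hmem : (∑ i ∈ s, f i) ∈ piece ℤ M d := Submodule.sum_mem _ hf
  rw [DD_eq deg hmem]
  have h2 : (⟨∑ i ∈ s, f i, hmem⟩ : (piece ℤ M d)) = ∑ i ∈ s, g i := by
    apply Subtype.ext
    rw [AddSubmonoidClass.coe_finset_sum]
    exact (Finset.sum_congr rfl hgi).symm
  rw [h2, map_sum]
  apply Finset.sum_congr rfl
  intro i hi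
  rw [DD_eq deg (hf i hi)]
  congr 1
  exact Subtype.ext (hgi i hi)

end DegFun
end FinMatroid
set_option synthInstance.maxHeartbeats 1000000
set_option maxHeartbeats 1000000
namespace FinMatroid
variable {E : Type*} [Fintype E] [DecidableEq E]
open Classical MvPolynomial

section Lists
variable (M : FinMatroid E)

noncomputable def xlist : List (ProperFlat M) → ChowRing ℤ M :=
  fun l => (l.map (xv M)).prod

def GoodL : ℕ → List (ProperFlat M) → Prop
  | _, [] => True
  | s, (F :: t) => M.rank F.1 = s + 1 ∧ GoodL (s + 1) t

variable {M}

lemma xlist_nil : xlist M [] = 1 := rfl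

lemma xlist_cons (F : ProperFlat M) (t : List (ProperFlat M)) :
    xlist M (F :: t) = xv M F * xlist M t := by
  simp [xlist]

lemma xlist_concat (l : List (ProperFlat M)) (G : ProperFlat M) :
    xlist M (l ++ [G]) = xlist M l * xv M G := by
  simp [xlist]

lemma xlist_mem (l : List (ProperFlat M)) : xlist M l ∈ piece ℤ M l.length := by
  induction l with
  | nil =>
      rw [xlist_nil]
      have h1 : (1 : ChowRing ℤ M) = chowMk ℤ M 1 := (map_one _).symm
      rw [h1]
      exact mk_mem_piece ℤ (MvPolynomial.isHomogeneous_one _ _)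
  | cons F t ih =>
      rw [xlist_cons]
      have := mul_mem_piece ℤ (xv_mem F) ih
      simpa [List.length_cons, Nat.add_comm] using this

lemma goodL_nil (s : ℕ) : GoodL M s [] := trivial

lemma goodL_cons {s : ℕ} {F : ProperFlat M} {t : List (ProperFlat M)} :
    GoodL M s (F :: t) ↔ M.rank F.1 = s + 1 ∧ GoodL M (s + 1) t := Iff.rfl

lemma goodL_append (l : List (ProperFlat M)) (G : ProperFlat M) :
    ∀ s, GoodL M s (l ++ [G]) ↔ (GoodL M s l ∧ M.rank G.1 = s + l.length + 1) := by
  induction l with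
  | nil =>
      intro s
      simp [GoodL]
  | cons F t ih =>
      intro s
      rw [List.cons_append, goodL_cons, goodL_cons, ih (s + 1)]
      constructor
      · rintro ⟨h1, h2, h3⟩
        refine ⟨⟨h1, h2⟩, ?_⟩
        simp only [List.length_cons]
        omega
      · rintro ⟨⟨h1, h2⟩, h3⟩
        simp only [List.length_cons] at h3
        exact ⟨h1, h2, by omega⟩

lemma goodL_last : ∀ (l : List (ProperFlat M)) (s : ℕ), GoodL M s l → ∀ hne : l ≠ [],
    M.rank (l.getLast hne).1 = s + l.length := by
  intro l
  induction l with
  | nil => intro s _ hne; exact absurd rfl hne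
  | cons F t ih =>
      intro s h hne
      rcases h with ⟨h1, h2⟩
      cases t with
      | nil => simpa using h1
      | cons G u =>
          rw [List.getLast_cons (by simp : (G :: u) ≠ [])]
          have := ih (s + 1) h2 (by simp)
          rw [this]
          simp only [List.length_cons]
          omega

lemma chain_mem_lt : ∀ (l : List (ProperFlat M)) (F : ProperFlat M),
    List.Chain' (fun A B : ProperFlat M => A.1 ⊂ B.1) (F :: l) →
    ∀ G ∈ l, F.1 ⊂ G.1 := by
  intro l
  induction l with
  | nil => intro F _ G hG; exact absurd hG (by simp)
  | cons H u ih =>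
      intro F hchain G hG
      rw [List.Chain', List.isChain_cons_cons] at hchain
      rcases List.mem_cons.mp hG with rfl | hGu
      · exact hchain.1
      · exact hchain.1.trans (ih H hchain.2 G hGu)

lemma chain_rank_last : ∀ (l : List (ProperFlat M)) (s : ℕ),
    List.Chain' (fun A B : ProperFlat M => A.1 ⊂ B.1) l →
    (∀ F ∈ l, s < M.rank F.1) → ∀ hne : l ≠ [],
    s + l.length ≤ M.rank (l.getLast hne).1 := by
  intro l
  induction l with
  | nil => intro s _ _ hne; exact absurd rfl hne
  | cons F t ih =>
      intro s hchain hrk hne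
      cases t with
      | nil =>
          have := hrk F (by simp)
          simpa using this
      | cons G u =>
          have hFt : ∀ H ∈ (G :: u), M.rank F.1 < M.rank H.1 := by
            intro H hH
            exact rank_lt_of_flat_ssubset F.2.1 H.2.1 (chain_mem_lt _ F hchain H hH)
          have hF := hrk F (by simp)
          have := ih (M.rank F.1) (List.IsChain.tail hchain) hFt (by simp)
          rw [List.getLast_cons (by simp : (G :: u) ≠ [])]
          simp only [List.length_cons] at this ⊢
          omega

lemma chain_good : ∀ (l : List (ProperFlat M)) (s : ℕ),
    List.Chain' (fun A B : ProperFlat M => A.1 ⊂ B.1) l →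
    (∀ F ∈ l, s < M.rank F.1) →
    GoodL M s l ∨ ∃ hne : l ≠ [], s + l.length < M.rank (l.getLast hne).1 := by
  intro l
  induction l with
  | nil => intro s _ _; exact Or.inl trivial
  | cons F t ih =>
      intro s hchain hrk
      have hF := hrk F (by simp)
      rcases eq_or_lt_of_le (Nat.succ_le_of_lt hF) with heq | hlt
      · -- rank F = s + 1
        have ht : ∀ G ∈ t, s + 1 < M.rank G.1 := by
          intro G hG
          have := rank_lt_of_flat_ssubset F.2.1 G.2.1 (chain_mem_lt _ F hchain G hG)
          omega
        rcases ih (s + 1) (List.IsChain.tail hchain) ht with hg | ⟨hne, hlast⟩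
        · exact Or.inl ⟨heq.symm, hg⟩
        · refine Or.inr ⟨by simp, ?_⟩
          rw [List.getLast_cons hne]
          simp only [List.length_cons]
          omega
      · -- s + 1 < rank F
        refine Or.inr ⟨by simp, ?_⟩
        have hall : ∀ G ∈ (F :: t), s + 1 < M.rank G.1 := by
          intro G hG
          rcases List.mem_cons.mp hG with rfl | hGt
          · exact hlt
          · have := rank_lt_of_flat_ssubset F.2.1 G.2.1 (chain_mem_lt _ F hchain G hGt)
            omega
        have := chain_rank_last (F :: t) (s + 1) hchain hall (by simp)
        omega

end Lists
end FinMatroid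
set_option synthInstance.maxHeartbeats 1000000
set_option maxHeartbeats 1000000
namespace FinMatroid
variable {E : Type*} [Fintype E] [DecidableEq E]
open Classical MvPolynomial

variable {M : FinMatroid E}

lemma xlist_eq_prod (l : List (ProperFlat M)) :
    xlist M l = ∏ i : Fin l.length, xv M (l.get i) := by
  rw [xlist.eq_def]
  have h1 : l.map (xv M) = List.ofFn (fun i => xv M (l.get i)) := by
    conv_lhs => rw [← List.ofFn_get l]
    rw [List.map_ofFn]
    rfl
  rw [h1, List.prod_ofFn]

/-- The unique rank-one flat containing a given element, as a proper flat
(assuming `d ≥ 1`). -/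
lemma atom_properFlat (hM : M.Loopless) {d : ℕ} (hrk : M.rk = d + 1) (hd : 1 ≤ d) (a : E) :
    ∃ G₀ : ProperFlat M, G₀.1 = M.closure {a} ∧ a ∈ G₀.1 ∧ M.rank G₀.1 = 1 := by
  have hflat := closure_flat (M := M) ({a} : Finset E)
  have hrank : M.rank (M.closure {a}) = 1 := by
    rw [rank_closure, rank_singleton hM]
  have hmem : a ∈ M.closure {a} := subset_closure _ (by simp)
  have hneu : M.closure {a} ≠ Finset.univ := by
    intro h
    have : M.rank (M.closure {a}) = M.rk := by rw [h]; rfl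
    omega
  exact ⟨⟨M.closure {a}, hflat, Finset.nonempty_iff_ne_empty.mp ⟨a, hmem⟩, hneu⟩,
    rfl, hmem, hrank⟩

lemma succ_properFlat (hM : M.Loopless) {d : ℕ} (hrk : M.rk = d + 1)
    (T : ProperFlat M) {a : E} (ha : a ∉ T.1) (hT : M.rank T.1 + 1 ≤ d) :
    ∃ G₀ : ProperFlat M, G₀.1 = M.closure (insert a T.1) ∧ T.1 ⊂ G₀.1 ∧ a ∈ G₀.1 ∧
      M.rank G₀.1 = M.rank T.1 + 1 := by
  have hflat := closure_flat (M := M) (insert a T.1)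
  have hrank : M.rank (M.closure (insert a T.1)) = M.rank T.1 + 1 :=
    rank_closure_insert_flat T.2.1 ha
  have hmem : a ∈ M.closure (insert a T.1) := subset_closure _ (Finset.mem_insert_self _ _)
  have hsub : T.1 ⊆ M.closure (insert a T.1) :=
    (Finset.subset_insert _ _).trans (subset_closure _)
  have hneu : M.closure (insert a T.1) ≠ Finset.univ := by
    intro h
    have : M.rank (M.closure (insert a T.1)) = M.rk := by rw [h]; rfl
    omega
  refine ⟨⟨M.closure (insert a T.1), hflat, Finset.nonempty_iff_ne_empty.mp ⟨a, hmem⟩, hneu⟩,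
    rfl, Finset.ssubset_iff_subset_ne.mpr ⟨hsub, fun h => ha (h ▸ hmem)⟩, hmem, hrank⟩

lemma lemA (hM : M.Loopless) {d : ℕ} (hrk : M.rk = d + 1) (e : E)
    (deg : (piece ℤ M d) →+ ℤ)
    (hdeg : ∀ flag : Fin d → ProperFlat M, (∀ i j : Fin d, i < j → (flag i).1 ⊂ (flag j).1) →
      deg ⟨chowMk ℤ M (∏ i, MvPolynomial.X (flag i)), flagMonomial_mem ℤ M d flag⟩ = 1) :
    ∀ (n : ℕ) (l : List (ProperFlat M)),
      List.Chain' (fun A B : ProperFlat M => A.1 ⊂ B.1) l → l.length + n = d →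
      DD M d deg (av M e ^ n * xlist M l) = if GoodL M 0 l then 1 else 0 := by
  intro n
  induction n with
  | zero =>
      intro l hchain hlen
      have hlen' : l.length = d := by omega
      have hgood : GoodL M 0 l := by
        rcases chain_good l 0 hchain (fun F _ =>
          rank_pos_of_nonempty hM (Finset.nonempty_iff_ne_empty.mpr F.2.2.1)) with h | ⟨hne, hlt⟩
        · exact h
        · exfalso
          have h1 : M.rank ((l.getLast hne).1) ≤ d :=
            flat_rank_le_d hM hrk (mem_flats.mpr (l.getLast hne).2.1) (l.getLast hne).2.2.2
          omega
      rw [if_pos hgood]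
      have hmem : av M e ^ 0 * xlist M l ∈ piece ℤ M d := by
        have := xlist_mem l
        rw [hlen'] at this
        simpa using this
      rw [DD_eq deg hmem]
      set flag : Fin d → ProperFlat M := fun i => l.get (Fin.cast hlen'.symm i) with hflag
      have hp : List.Pairwise (fun A B : ProperFlat M => A.1 ⊂ B.1) l := by
        haveI : IsTrans (ProperFlat M) (fun A B : ProperFlat M => A.1 ⊂ B.1) :=
          ⟨fun _ _ _ h1 h2 => h1.trans h2⟩
        exact List.isChain_iff_pairwise.mp hchain
      have hmono : ∀ i j : Fin d, i < j → (flag i).1 ⊂ (flag j).1 := by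
        intro i j hij
        exact List.pairwise_iff_get.mp hp _ _ (by simpa using hij)
      have heq : chowMk ℤ M (∏ i, MvPolynomial.X (flag i)) = av M e ^ 0 * xlist M l := by
        rw [map_prod, pow_zero, one_mul, xlist_eq_prod]
        exact Fintype.prod_equiv (finCongr hlen'.symm) _ _ (fun i => rfl)
      rw [← hdeg flag hmono]
      congr 1
      exact Subtype.ext heq.symm
  | succ n ih =>
      intro l hchain hlen
      cases l with
      | nil =>
          have hd : 1 ≤ d := by simp at hlen; omega
          have hexp : av M e ^ (n + 1) * xlist M [] =
              ∑ G ∈ Finset.univ.filter (fun G : ProperFlat M => e ∈ G.1),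
                av M e ^ n * xlist M [G] := by
            rw [xlist_nil, mul_one, pow_succ, av_eq e e, Finset.mul_sum]
            apply Finset.sum_congr rfl
            intro G _
            rw [xlist_cons, xlist_nil, mul_one]
          have hmemf : ∀ G ∈ Finset.univ.filter (fun G : ProperFlat M => e ∈ G.1),
              av M e ^ n * xlist M [G] ∈ piece ℤ M d := by
            intro G _
            have := mul_mem_piece ℤ (pow_mem_piece ℤ (av_mem e) n) (xlist_mem [G])
            have hnd : n + (1:ℕ) = d := by simp at hlen; omega
            rwa [show ([G] : List (ProperFlat M)).length = 1 from rfl, hnd] at this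
          rw [hexp, DD_sum deg hmemf]
          have hih : ∀ G ∈ Finset.univ.filter (fun G : ProperFlat M => e ∈ G.1),
              DD M d deg (av M e ^ n * xlist M [G])
                = if M.rank G.1 = 1 then 1 else 0 := by
            intro G _
            rw [ih [G] (List.isChain_singleton G) (by have h9 : n + 1 = d := (by simpa using hlen); show 1 + n = d; omega)]
            have : GoodL M 0 [G] ↔ M.rank G.1 = 1 := by
              rw [goodL_cons]
              simp [goodL_nil]
            simp only [this]
          rw [Finset.sum_congr rfl hih, Finset.sum_ite, Finset.sum_const_zero, add_zero,
            Finset.sum_const, Finset.filter_filter, nsmul_eq_mul, mul_one]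
          obtain ⟨G₀, hG₀, haG₀, hrG₀⟩ := atom_properFlat hM hrk hd e
          have hset : Finset.univ.filter (fun G : ProperFlat M => e ∈ G.1 ∧ M.rank G.1 = 1)
              = {G₀} := by
            ext G
            simp only [Finset.mem_filter, Finset.mem_univ, true_and, Finset.mem_singleton]
            constructor
            · rintro ⟨h1, h2⟩
              apply Subtype.ext
              rw [hG₀]
              refine (flat_eq_of_subset_of_rank_le (closure_flat _) G.2.1
                (closure_subset_flat (by simpa using h1) G.2.1) ?_).symm
              rw [rank_closure, rank_singleton hM]
              omega
            · rintro rfl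
              exact ⟨haG₀, hrG₀⟩
          rw [hset, Finset.card_singleton, if_pos (goodL_nil 0)]
          exact Nat.cast_one
      | cons F t =>
          have hne : (F :: t) ≠ [] := by simp
          set l := F :: t with hl
          set T := l.getLast hne with hT
          obtain ⟨a, ha⟩ : ∃ a, a ∉ T.1 := by
            by_contra hcon
            push_neg at hcon
            exact T.2.2.2 (Finset.eq_univ_iff_forall.mpr hcon)
          have hxl : xlist M l = xlist M l.dropLast * xv M T := by
            conv_lhs => rw [← List.dropLast_append_getLast hne]
            rw [xlist_concat]
          have hexp : av M e ^ (n + 1) * xlist M l =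
              ∑ G ∈ Finset.univ.filter (fun G : ProperFlat M => T.1 ⊂ G.1 ∧ a ∈ G.1),
                av M e ^ n * xlist M (l ++ [G]) := by
            have h1 : av M e ^ (n + 1) * xlist M l
                = av M e ^ n * (av M e * (xlist M l.dropLast * xv M T)) := by
              rw [← hxl]; ring
            rw [h1, expA e _ T ha, Finset.mul_sum]
            apply Finset.sum_congr rfl
            intro G _
            rw [xlist_concat, hxl]
          have hlen2 : ∀ G : ProperFlat M, (l ++ [G]).length + n = d := by
            intro G
            simp only [List.length_append, List.length_singleton]
            omega
          have hmemf : ∀ G ∈ Finset.univ.filter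
              (fun G : ProperFlat M => T.1 ⊂ G.1 ∧ a ∈ G.1),
              av M e ^ n * xlist M (l ++ [G]) ∈ piece ℤ M d := by
            intro G _
            have := mul_mem_piece ℤ (pow_mem_piece ℤ (av_mem e) n) (xlist_mem (l ++ [G]))
            have h2 : n + (l ++ [G]).length = d := by have := hlen2 G; omega
            rwa [h2] at this
          rw [hexp, DD_sum deg hmemf]
          have hchain2 : ∀ G : ProperFlat M, T.1 ⊂ G.1 →
              List.Chain' (fun A B : ProperFlat M => A.1 ⊂ B.1) (l ++ [G]) := by
            intro G hG
            rw [List.Chain', List.isChain_append]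
            refine ⟨hchain, List.isChain_singleton G, ?_⟩
            intro x hx y hy
            rw [List.getLast?_eq_getLast_of_ne_nil hne] at hx
            simp only [Option.mem_def, Option.some_inj] at hx
            simp only [List.head?_cons, Option.mem_def, Option.some_inj] at hy
            rw [← hx, ← hy] at *
            exact hG
          have hih : ∀ G ∈ Finset.univ.filter
              (fun G : ProperFlat M => T.1 ⊂ G.1 ∧ a ∈ G.1),
              DD M d deg (av M e ^ n * xlist M (l ++ [G]))
                = if GoodL M 0 l ∧ M.rank G.1 = l.length + 1 then 1 else 0 := by
            intro G hG
            rw [Finset.mem_filter] at hG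
            rw [ih (l ++ [G]) (hchain2 G hG.2.1) (hlen2 G)]
            have := goodL_append l G 0
            simp only [Nat.zero_add] at this
            simp only [this]
          rw [Finset.sum_congr rfl hih]
          by_cases hg : GoodL M 0 l
          · rw [if_pos hg]
            have hrT : M.rank T.1 = l.length := by
              rw [hT]
              have := goodL_last l 0 hg hne
              omega
            have hTd : M.rank T.1 + 1 ≤ d := by
              rw [hrT]
              omega
            obtain ⟨G₀, hG₀, hTG₀, haG₀, hrG₀⟩ := succ_properFlat hM hrk T ha hTd
            have hsimp : ∀ G ∈ Finset.univ.filter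
                (fun G : ProperFlat M => T.1 ⊂ G.1 ∧ a ∈ G.1),
                (if GoodL M 0 l ∧ M.rank G.1 = l.length + 1 then (1:ℤ) else 0)
                  = if M.rank G.1 = l.length + 1 then 1 else 0 := by
              intro G _
              by_cases h : M.rank G.1 = l.length + 1
              · rw [if_pos ⟨hg, h⟩, if_pos h]
              · rw [if_neg (fun hc => h hc.2), if_neg h]
            rw [Finset.sum_congr rfl hsimp, Finset.sum_ite, Finset.sum_const_zero, add_zero,
              Finset.sum_const, Finset.filter_filter, nsmul_eq_mul, mul_one]
            have hset : Finset.univ.filter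
                (fun G : ProperFlat M => (T.1 ⊂ G.1 ∧ a ∈ G.1) ∧ M.rank G.1 = l.length + 1)
                = {G₀} := by
              ext G
              simp only [Finset.mem_filter, Finset.mem_univ, true_and, Finset.mem_singleton]
              constructor
              · rintro ⟨⟨h1, h2⟩, h3⟩
                apply Subtype.ext
                rw [hG₀]
                apply flat_eq_closure_insert T.2.1 G.2.1 ha h1.subset h2
                omega
              · rintro rfl
                exact ⟨⟨hTG₀, haG₀⟩, by omega⟩
            rw [hset, Finset.card_singleton]
            exact Nat.cast_one
          · rw [if_neg hg]
            apply Finset.sum_eq_zero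
            intro G _
            rw [if_neg (fun hc => hg hc.1)]

end FinMatroid
set_option synthInstance.maxHeartbeats 1000000
set_option maxHeartbeats 1000000
namespace FinMatroid
variable {E : Type*} [Fintype E] [DecidableEq E]
open Classical MvPolynomial

variable {M : FinMatroid E}

lemma sum_properFlat (p : Finset E → Prop) (f : Finset E → ℤ)
    (hp : ∀ G ∈ M.flats, p G → G ≠ ∅ ∧ G ≠ Finset.univ) :
    ∑ G ∈ Finset.univ.filter (fun G : ProperFlat M => p G.1), f G.1
      = ∑ G ∈ M.flats.filter p, f G := by
  apply Finset.sum_bij (fun (G : ProperFlat M) _ => G.1)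
  · intro G hG
    rw [Finset.mem_filter] at hG ⊢
    exact ⟨mem_flats.mpr G.2.1, hG.2⟩
  · intro G1 _ G2 _ h
    exact Subtype.ext h
  · intro G hG
    rw [Finset.mem_filter] at hG
    obtain ⟨h1, h2⟩ := hp G hG.1 hG.2
    exact ⟨⟨G, mem_flats.mp hG.1, h1, h2⟩,
      by exact Finset.mem_filter.mpr ⟨Finset.mem_univ _, hG.2⟩, rfl⟩
  · intro G _
    rfl

lemma lemB (hM : M.Loopless) {d : ℕ} (hrk : M.rk = d + 1) (e : E)
    (deg : (piece ℤ M d) →+ ℤ)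
    (hdeg : ∀ flag : Fin d → ProperFlat M, (∀ i j : Fin d, i < j → (flag i).1 ⊂ (flag j).1) →
      deg ⟨chowMk ℤ M (∏ i, MvPolynomial.X (flag i)), flagMonomial_mem ℤ M d flag⟩ = 1) :
    ∀ (s n : ℕ) (F : ProperFlat M) (t : List (ProperFlat M)),
      List.Chain' (fun A B : ProperFlat M => A.1 ⊂ B.1) (F :: t) →
      n + (s + (F :: t).length) = d →
      DD M d deg (av M e ^ n * (bv M e ^ s * xlist M (F :: t)))
        = if GoodL M s (F :: t) then cw M e s F.1 else 0 := by
  intro s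
  induction s with
  | zero =>
      intro n F t hchain hlen
      have h1 : av M e ^ n * (bv M e ^ 0 * xlist M (F :: t))
          = av M e ^ n * xlist M (F :: t) := by
        rw [pow_zero, one_mul]
      rw [h1, lemA hM hrk e deg hdeg n (F :: t) hchain (by omega)]
      rw [show cw M e 0 F.1 = 1 from by rw [cw]]
  | succ s ih =>
      intro n F t hchain hlen
      have hFne : F.1.Nonempty := Finset.nonempty_iff_ne_empty.mpr F.2.2.1
      set a := pick e F.1 with hadef
      have ha : a ∈ F.1 := pick_mem hFne
      have h1 : av M e ^ n * (bv M e ^ (s + 1) * xlist M (F :: t))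
          = av M e ^ n * bv M e ^ s * (bv M e * (xv M F * xlist M t)) := by
        rw [xlist_cons]; ring
      have hexp : av M e ^ n * (bv M e ^ (s + 1) * xlist M (F :: t))
          = ∑ G ∈ Finset.univ.filter (fun G : ProperFlat M => G.1 ⊂ F.1 ∧ a ∉ G.1),
              av M e ^ n * (bv M e ^ s * xlist M (G :: F :: t)) := by
        rw [h1, expB e (xlist M t) F ha, Finset.mul_sum]
        apply Finset.sum_congr rfl
        intro G _
        rw [xlist_cons, xlist_cons]
        ring
      have hmemf : ∀ G ∈ Finset.univ.filter
          (fun G : ProperFlat M => G.1 ⊂ F.1 ∧ a ∉ G.1),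
          av M e ^ n * (bv M e ^ s * xlist M (G :: F :: t)) ∈ piece ℤ M d := by
        intro G _
        have := mul_mem_piece ℤ (pow_mem_piece ℤ (av_mem e) n)
          (mul_mem_piece ℤ (pow_mem_piece ℤ (bv_mem e) s) (xlist_mem (G :: F :: t)))
        have h2 : n + (s + (G :: F :: t).length) = d := by
          simp only [List.length_cons] at hlen ⊢
          omega
        rwa [h2] at this
      rw [hexp, DD_sum deg hmemf]
      have hih : ∀ G ∈ Finset.univ.filter
          (fun G : ProperFlat M => G.1 ⊂ F.1 ∧ a ∉ G.1),
          DD M d deg (av M e ^ n * (bv M e ^ s * xlist M (G :: F :: t)))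
            = if M.rank G.1 = s + 1 ∧ GoodL M (s + 1) (F :: t) then cw M e s G.1 else 0 := by
        intro G hG
        rw [Finset.mem_filter] at hG
        rw [ih n G (F :: t) (List.isChain_cons_cons.mpr ⟨hG.2.1, hchain⟩)
          (by simp only [List.length_cons] at hlen ⊢; omega)]
        exact if_congr goodL_cons rfl rfl
      rw [Finset.sum_congr rfl hih]
      by_cases hg : GoodL M (s + 1) (F :: t)
      · rw [if_pos hg]
        have hsimp : ∀ G ∈ Finset.univ.filter
            (fun G : ProperFlat M => G.1 ⊂ F.1 ∧ a ∉ G.1),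
            (if M.rank G.1 = s + 1 ∧ GoodL M (s + 1) (F :: t) then cw M e s G.1 else 0)
              = if M.rank G.1 = s + 1 then cw M e s G.1 else 0 := by
          intro G _
          by_cases h : M.rank G.1 = s + 1
          · rw [if_pos ⟨h, hg⟩, if_pos h]
          · rw [if_neg (fun hc => h hc.1), if_neg h]
        rw [Finset.sum_congr rfl hsimp, Finset.sum_ite, Finset.sum_const_zero, add_zero,
          Finset.filter_filter]
        have hre : ∑ G ∈ Finset.univ.filter
            (fun G : ProperFlat M => (G.1 ⊂ F.1 ∧ a ∉ G.1) ∧ M.rank G.1 = s + 1),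
              cw M e s G.1
            = ∑ G ∈ M.flats.filter
                (fun G => G ⊂ F.1 ∧ pick e F.1 ∉ G ∧ M.rank G = s + 1), cw M e s G := by
          have heq : Finset.univ.filter
              (fun G : ProperFlat M => (G.1 ⊂ F.1 ∧ a ∉ G.1) ∧ M.rank G.1 = s + 1)
              = Finset.univ.filter
                (fun G : ProperFlat M => G.1 ⊂ F.1 ∧ pick e F.1 ∉ G.1 ∧ M.rank G.1 = s + 1) := by
            apply Finset.filter_congr
            intro G _
            rw [← hadef]
            constructor
            · rintro ⟨⟨u1, u2⟩, u3⟩; exact ⟨u1, u2, u3⟩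
            · rintro ⟨u1, u2, u3⟩; exact ⟨⟨u1, u2⟩, u3⟩
          rw [heq]
          have hp : ∀ G ∈ M.flats, (G ⊂ F.1 ∧ pick e F.1 ∉ G ∧ M.rank G = s + 1) →
              G ≠ ∅ ∧ G ≠ Finset.univ := by
            intro G hGf hpG
            constructor
            · intro hGe
              have := hpG.2.2
              rw [hGe, rank_empty] at this
              omega
            · intro hGu
              have := hpG.1
              rw [hGu] at this
              exact F.2.2.2 (Finset.Subset.antisymm (Finset.subset_univ _) this.subset)
          have h5 := sum_properFlat
            (fun G => G ⊂ F.1 ∧ pick e F.1 ∉ G ∧ M.rank G = s + 1) (cw M e s) hp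
          convert h5 using 3
        rw [hre, ← cw]
        -- goal: cw M e (s+1) F.1 = cw M e (s+1) F.1
      · rw [if_neg hg]
        apply Finset.sum_eq_zero
        intro G _
        rw [if_neg (fun hc => hg hc.2)]

end FinMatroid
set_option synthInstance.maxHeartbeats 1000000 in
set_option maxHeartbeats 1000000 in
open FinMatroid in
/-- Let `M` be a loopless matroid of rank `d+1` on a finite nonempty ground set `E`, fix
`e ∈ E`, and let `α` (resp. `β`) be the image in `A¹(M)` of the sum of the `x_F` over the
nonempty proper flats containing (resp. not containing) `e`. Write the reduced
characteristic polynomial as `χ̄_M(t) = χ_M(t)/(t-1) = Σ_k (-1)^k m_k t^{d-k}`. Then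
`m_k = deg(α^{d-k} · β^k)` for all `0 ≤ k ≤ d`. -/
theorem reduced_charPoly_coeff_eq_deg {E : Type*} [Fintype E] [DecidableEq E]
    (M : FinMatroid E) (hM : M.Loopless) (d : ℕ) (hrk : M.rk = d + 1) (e : E)
    (mu : Finset E → Finset E → ℤ) (hmu : M.IsMobius mu)
    (q : Polynomial ℤ) (hq : M.charPoly mu = (Polynomial.X - 1) * q)
    (deg : (piece ℤ M d) →+ ℤ) (hdeg_bij : Function.Bijective deg)
    (hdeg : ∀ flag : Fin d → ProperFlat M, (∀ i j : Fin d, i < j → (flag i).1 ⊂ (flag j).1) →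
      deg ⟨chowMk ℤ M (∏ i, MvPolynomial.X (flag i)), flagMonomial_mem ℤ M d flag⟩ = 1)
    (k : ℕ) (hk : k ≤ d) :
    (-1 : ℤ) ^ k * q.coeff (d - k) =
      deg ⟨(chowMk ℤ M (∑ F : ProperFlat M,
              if e ∈ F.1 then MvPolynomial.X F else 0)) ^ (d - k) *
           (chowMk ℤ M (∑ F : ProperFlat M,
              if e ∉ F.1 then MvPolynomial.X F else 0)) ^ k, by
        have hα : (chowMk ℤ M (∑ F : ProperFlat M,
            if e ∈ F.1 then MvPolynomial.X F else 0)) ∈ piece ℤ M 1 := by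
          refine mk_mem_piece ℤ ?_
          have h := isHomogeneous_comb ℤ M (fun F => e ∈ F.1) (fun _ => 1)
          simpa using h
        have hβ : (chowMk ℤ M (∑ F : ProperFlat M,
            if e ∉ F.1 then MvPolynomial.X F else 0)) ∈ piece ℤ M 1 := by
          refine mk_mem_piece ℤ ?_
          have h := isHomogeneous_comb ℤ M (fun F => e ∉ F.1) (fun _ => 1)
          simpa using h
        have h := mul_mem_piece ℤ (pow_mem_piece ℤ hα (d - k)) (pow_mem_piece ℤ hβ k)
        have hd : d - k + k = d := by omega
        rwa [hd] at h⟩ := by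
    classical
  have hmem : av M e ^ (d - k) * bv M e ^ k ∈ piece ℤ M d := by
    have h0 := mul_mem_piece ℤ (pow_mem_piece ℤ (av_mem (M := M) e) (d - k))
      (pow_mem_piece ℤ (bv_mem (M := M) e) k)
    have h2 : d - k + k = d := by omega
    rwa [h2] at h0
  show (-1 : ℤ) ^ k * q.coeff (d - k) = deg ⟨av M e ^ (d - k) * bv M e ^ k, hmem⟩
  rw [← DD_eq deg hmem]
  rcases Nat.eq_zero_or_pos k with rfl | hkpos
  · have h1 : av M e ^ (d - 0) * bv M e ^ 0 = av M e ^ d * xlist M [] := by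
      rw [xlist_nil, pow_zero, Nat.sub_zero, mul_one]
    rw [h1, lemA hM hrk e deg hdeg d [] List.isChain_nil (by simp), if_pos (goodL_nil 0)]
    rw [q_coeff hM hrk e hmu hq (Nat.zero_le d)]
    have hset : M.flats.filter (fun F => e ∉ F ∧ M.rank F = 0) = {∅} := by
      ext F
      rw [Finset.mem_filter, Finset.mem_singleton]
      constructor
      · rintro ⟨_, _, hr⟩
        by_contra hne
        have := rank_pos_of_nonempty hM (Finset.nonempty_iff_ne_empty.mpr hne)
        omega
      · rintro rfl
        exact ⟨mem_flats.mpr hM, by simp, rank_empty⟩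
    rw [hset, Finset.sum_singleton, mu_self_empty hM hmu]
    ring
  · obtain ⟨k', rfl⟩ : ∃ k', k = k' + 1 := ⟨k - 1, by omega⟩
    have hsplit : av M e ^ (d - (k' + 1)) * bv M e ^ (k' + 1)
        = ∑ G ∈ Finset.univ.filter (fun G : ProperFlat M => e ∉ G.1),
            av M e ^ (d - (k' + 1)) * (bv M e ^ k' * xlist M [G]) := by
      have h2 : av M e ^ (d - (k' + 1)) * bv M e ^ (k' + 1)
          = av M e ^ (d - (k' + 1)) * bv M e ^ k' * bv M e := by ring
      rw [h2, bv_eq e e, Finset.mul_sum]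
      apply Finset.sum_congr rfl
      intro G _
      rw [xlist_cons, xlist_nil, mul_one]
      ring
    have hmemf : ∀ G ∈ Finset.univ.filter (fun G : ProperFlat M => e ∉ G.1),
        av M e ^ (d - (k' + 1)) * (bv M e ^ k' * xlist M [G]) ∈ piece ℤ M d := by
      intro G _
      have h0 := mul_mem_piece ℤ (pow_mem_piece ℤ (av_mem (M := M) e) (d - (k' + 1)))
        (mul_mem_piece ℤ (pow_mem_piece ℤ (bv_mem (M := M) e) k') (xlist_mem [G]))
      have h2 : d - (k' + 1) + (k' + ([G] : List (ProperFlat M)).length) = d := by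
        simp only [List.length_cons, List.length_nil]
        omega
      rwa [h2] at h0
    rw [hsplit, DD_sum deg hmemf]
    have hih : ∀ G ∈ Finset.univ.filter (fun G : ProperFlat M => e ∉ G.1),
        DD M d deg (av M e ^ (d - (k' + 1)) * (bv M e ^ k' * xlist M [G]))
          = if M.rank G.1 = k' + 1 then cw M e k' G.1 else 0 := by
      intro G _
      rw [lemB hM hrk e deg hdeg k' (d - (k' + 1)) G [] (List.isChain_singleton G)
        (by simp only [List.length_cons, List.length_nil]; omega)]
      exact if_congr (Iff.trans goodL_cons (and_iff_left (goodL_nil _))) rfl rfl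
    rw [Finset.sum_congr rfl hih, Finset.sum_ite, Finset.sum_const_zero, add_zero,
      Finset.filter_filter]
    have hmu2 : ∀ G ∈ Finset.univ.filter
        (fun G : ProperFlat M => e ∉ G.1 ∧ M.rank G.1 = k' + 1),
        cw M e k' G.1 = (-1 : ℤ) ^ (k' + 1) * mu ∅ G.1 := by
      intro G hG
      rw [Finset.mem_filter] at hG
      exact cw_eq_mu hM hmu e k' G.1 (mem_flats.mpr G.2.1) hG.2.2
    rw [Finset.sum_congr rfl hmu2, ← Finset.mul_sum]
    rw [q_coeff hM hrk e hmu hq hk]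
    congr 1
    have hp : ∀ G ∈ M.flats, (e ∉ G ∧ M.rank G = k' + 1) → G ≠ ∅ ∧ G ≠ Finset.univ := by
      intro G _ hpG
      constructor
      · intro hGe
        have := hpG.2
        rw [hGe, rank_empty] at this
        omega
      · intro hGu
        exact hpG.1 (hGu ▸ Finset.mem_univ e)
    have h5 := sum_properFlat (M := M) (fun G => e ∉ G ∧ M.rank G = k' + 1) (mu ∅) hp
    convert h5.symm using 3
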